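/- arXiv:1511.02572 — 4 statements merged into one kernel-verified Lean document; each statement's English description precedes it below -/
import Mathlib

section
/- Let φ : ℝ^{n+1} → ℝ be a C² nonnegative function with |∇φ(x)| ≤ j φ(x) and ‖∇²φ(x)‖ ≤ j φ(x) for all x, where j > 0. Then for all x, y ∈ ℝ^{n+1}, |φ(x) − φ(y) − ∇φ(y)·(x − y)| ≤ j |x − y|² φ(y) exp(j |x − y|). -/
open Real Set

/-- Gronwall-type growth bound: if `|∇φ| ≤ j φ`, then `φ b ≤ φ a * exp (j ‖b - a‖)`. -/
lemma stmt_2_aux {n : ℕ} (φ : EuclideanSpace ℝ (Fin (n+1)) → ℝ) (j : ℝ)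
    (hφ : ContDiff ℝ 2 φ) (hnonneg : ∀ x, 0 ≤ φ x)
    (hf : ∀ x, ‖fderiv ℝ φ x‖ ≤ j * φ x) (a b : EuclideanSpace ℝ (Fin (n+1))) :
    φ b ≤ φ a * Real.exp (j * ‖b - a‖) := by
  have hdiff : Differentiable ℝ φ := hφ.differentiable two_ne_zero
  set v := b - a with hv
  set γ : ℝ → EuclideanSpace ℝ (Fin (n+1)) := fun t => a + t • v with hγ
  have hγd : ∀ t : ℝ, HasDerivAt γ v t := fun t => by
    simpa [hγ] using ((hasDerivAt_id t).smul_const v).const_add a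
  set f : ℝ → ℝ := fun t => φ (γ t) with hfdef
  have hfd : ∀ t : ℝ, HasDerivAt f (fderiv ℝ φ (γ t) v) t := fun t =>
    ((hdiff (γ t)).hasFDerivAt).comp_hasDerivAt t (hγd t)
  have key : ∀ t ∈ Icc (0:ℝ) 1, ‖f t‖ ≤ gronwallBound (φ a) (j * ‖v‖) 0 (t - 0) := by
    apply norm_le_gronwallBound_of_norm_deriv_right_le
      (f' := fun t => fderiv ℝ φ (γ t) v)
    · exact fun t _ => (hfd t).continuousAt.continuousWithinAt
    · exact fun t _ => (hfd t).hasDerivWithinAt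
    · simp only [hfdef, hγ, zero_smul, add_zero, Real.norm_eq_abs,
        abs_of_nonneg (hnonneg a), le_refl]
    · intro t _
      have h1 : ‖fderiv ℝ φ (γ t) v‖ ≤ ‖fderiv ℝ φ (γ t)‖ * ‖v‖ :=
        (fderiv ℝ φ (γ t)).le_opNorm v
      have h2 : ‖fderiv ℝ φ (γ t)‖ * ‖v‖ ≤ (j * φ (γ t)) * ‖v‖ :=
        mul_le_mul_of_nonneg_right (hf (γ t)) (norm_nonneg v)
      calc ‖fderiv ℝ φ (γ t) v‖ ≤ (j * φ (γ t)) * ‖v‖ := h1.trans h2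
        _ = j * ‖v‖ * ‖f t‖ + 0 := by
            rw [Real.norm_eq_abs, abs_of_nonneg (hnonneg (γ t))]; ring
  have := key 1 ⟨zero_le_one, le_refl 1⟩
  rw [gronwallBound_ε0] at this
  have h1 : γ 1 = b := by simp [hγ, hv]
  rw [Real.norm_eq_abs, abs_of_nonneg (hnonneg _)] at this
  simp only [hfdef, h1] at this
  calc φ b ≤ φ a * Real.exp (j * ‖v‖ * (1 - 0)) := this
    _ = φ a * Real.exp (j * ‖b - a‖) := by rw [hv]; ring_nf

/-- For a nonnegative `C²` function `φ` with `|∇φ| ≤ j φ` and `‖∇²φ‖ ≤ j φ` everywhere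
(`j > 0`), one has the second order Taylor estimate
`|φ(x) − φ(y) − ∇φ(y)·(x − y)| ≤ j |x − y|² φ(y) exp(j |x − y|)`. -/
theorem stmt_2 {n : ℕ} (φ : EuclideanSpace ℝ (Fin (n+1)) → ℝ) (j : ℝ)
    (hj : 0 < j) (hφ : ContDiff ℝ 2 φ) (hnonneg : ∀ x, 0 ≤ φ x)
    (hgrad : ∀ x, ‖gradient φ x‖ ≤ j * φ x)
    (hhess : ∀ x, ‖iteratedFDeriv ℝ 2 φ x‖ ≤ j * φ x) :
    ∀ x y : EuclideanSpace ℝ (Fin (n+1)),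
      |φ x - φ y - fderiv ℝ φ y (x - y)| ≤ j * dist x y ^ 2 * φ y * Real.exp (j * dist x y) := by
  intro x y
  have hdiff : Differentiable ℝ φ := hφ.differentiable two_ne_zero
  have hf : ∀ z, ‖fderiv ℝ φ z‖ ≤ j * φ z := by
    intro z
    have : ‖gradient φ z‖ = ‖fderiv ℝ φ z‖ := by
      rw [gradient, LinearIsometryEquiv.norm_map]
    rw [← this]; exact hgrad z
  -- second derivative equals iteratedFDeriv 2 in norm
  have hsnd : ∀ z, ‖fderiv ℝ (fderiv ℝ φ) z‖ = ‖iteratedFDeriv ℝ 2 φ z‖ := by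
    intro z
    rw [← norm_iteratedFDeriv_zero (𝕜 := ℝ) (f := fderiv ℝ (fderiv ℝ φ)) (x := z),
      norm_iteratedFDeriv_fderiv, norm_iteratedFDeriv_fderiv]
  set d : ℝ := dist x y with hd
  have hd0 : 0 ≤ d := dist_nonneg
  set M : ℝ := j * φ y * Real.exp (j * d) with hM
  -- bound second derivative on segment
  have hseg : ∀ z ∈ segment ℝ y x, ‖z - y‖ ≤ d := by
    intro z hz
    obtain ⟨s, t, hs, ht, hst, rfl⟩ := hz
    have heq : s • y + t • x - y = t • (x - y) := by
      have hs1 : s = 1 - t := by linarith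
      rw [hs1]; module
    rw [heq, norm_smul, Real.norm_eq_abs, abs_of_nonneg ht, hd, dist_eq_norm]
    nlinarith [norm_nonneg (x - y)]
  have hbound2 : ∀ z ∈ segment ℝ y x, ‖fderiv ℝ (fderiv ℝ φ) z‖ ≤ M := by
    intro z hz
    rw [hsnd]
    calc ‖iteratedFDeriv ℝ 2 φ z‖ ≤ j * φ z := hhess z
      _ ≤ j * (φ y * Real.exp (j * ‖z - y‖)) :=
          mul_le_mul_of_nonneg_left (stmt_2_aux φ j hφ hnonneg hf y z) hj.le
      _ ≤ j * (φ y * Real.exp (j * d)) := by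
          have := Real.exp_le_exp.2 (mul_le_mul_of_nonneg_left (hseg z hz) hj.le)
          exact mul_le_mul_of_nonneg_left
            (mul_le_mul_of_nonneg_left this (hnonneg y)) hj.le
      _ = M := by rw [hM]; ring
  have hdφ2 : Differentiable ℝ (fderiv ℝ φ) :=
    (hφ.fderiv_right (m := 1) (by norm_num)).differentiable one_ne_zero
  -- Lipschitz bound on fderiv φ over the segment
  have hlip : ∀ z ∈ segment ℝ y x, ‖fderiv ℝ φ z - fderiv ℝ φ y‖ ≤ M * d := by
    intro z hz
    have := (convex_segment y x).norm_image_sub_le_of_norm_fderiv_le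
      (f := fderiv ℝ φ) (fun w _ => hdφ2 w) hbound2
      (left_mem_segment ℝ y x) hz
    calc ‖fderiv ℝ φ z - fderiv ℝ φ y‖ ≤ M * ‖z - y‖ := this
      _ ≤ M * d := by
        exact mul_le_mul_of_nonneg_left (hseg z hz)
          (mul_nonneg (mul_nonneg hj.le (hnonneg y)) (Real.exp_pos _).le)
  -- now apply mean value to g z = φ z - fderiv φ y z
  set L : EuclideanSpace ℝ (Fin (n+1)) →L[ℝ] ℝ := fderiv ℝ φ y with hL
  set g : EuclideanSpace ℝ (Fin (n+1)) → ℝ := fun z => φ z - L z with hg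
  have hgd : ∀ z, DifferentiableAt ℝ g z := fun z =>
    (hdiff z).sub (L.differentiable z)
  have hgderiv : ∀ z, fderiv ℝ g z = fderiv ℝ φ z - L := by
    intro z
    rw [hg]
    rw [fderiv_fun_sub (hdiff z) (L.differentiable z), L.fderiv]
  have hgbound : ∀ z ∈ segment ℝ y x, ‖fderiv ℝ g z‖ ≤ M * d := by
    intro z hz
    rw [hgderiv]
    exact hlip z hz
  have key := (convex_segment y x).norm_image_sub_le_of_norm_fderiv_le
    (f := g) (fun w _ => hgd w) hgbound (left_mem_segment ℝ y x)
    (right_mem_segment ℝ y x)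
  have hgx : g x - g y = φ x - φ y - L (x - y) := by
    simp only [hg, map_sub]
    ring
  rw [← Real.norm_eq_abs, ← hgx]
  calc ‖g x - g y‖ ≤ M * d * ‖x - y‖ := key
    _ = j * d ^ 2 * φ y * Real.exp (j * d) := by
        rw [hM, ← dist_eq_norm, ← hd]; ring
end

section
/- Let ν : (0,∞) → (0,∞) be monotone increasing and differentiable almost everywhere, with R > 0 and a measurable set A ⊆ [R/2, R] with Lebesgue measure L¹(A) ≥ R/4, such that for a.e. r ∈ A one has (1/2) ν(r) ≤ C (ν'(r))^{n/(n−1)} for a constant C > 0 and integer n ≥ 2. Then ν(R)^{1/n} ≥ n^{-1} (2C)^{(1−n)/n} R/4. -/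
open MeasureTheory

/-- If `ν : (0,∞) → (0,∞)` is monotone increasing and a.e. differentiable, and on a
measurable set `A ⊆ [R/2, R]` with `L¹(A) ≥ R/4` one has the differential inequality
`ν(r)/2 ≤ C (ν'(r))^{n/(n−1)}` a.e., then `ν(R)^{1/n} ≥ n⁻¹ (2C)^{(1−n)/n} R/4`. -/
theorem stmt_8 (n : ℕ) (hn : 2 ≤ n) (C R : ℝ) (hC : 0 < C) (hR : 0 < R)
    (ν : ℝ → ℝ) (hνpos : ∀ r, 0 < r → 0 < ν r) (hmono : MonotoneOn ν (Set.Ioi 0))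
    (hdiffae : ∀ᵐ r ∂(volume.restrict (Set.Ioi (0:ℝ))), DifferentiableAt ℝ ν r)
    (A : Set ℝ) (hA : A ⊆ Set.Icc (R/2) R) (hAm : MeasurableSet A)
    (hAvol : ENNReal.ofReal (R/4) ≤ volume A)
    (hineq : ∀ᵐ r ∂(volume.restrict A),
      DifferentiableAt ℝ ν r ∧ ν r / 2 ≤ C * (deriv ν r) ^ ((n:ℝ)/((n:ℝ)-1))) :
    (n:ℝ)⁻¹ * (2*C) ^ ((1-(n:ℝ))/(n:ℝ)) * (R/4) ≤ ν R ^ ((1:ℝ)/(n:ℝ)) := by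
  have hn2 : (2:ℝ) ≤ (n:ℝ) := by exact_mod_cast hn
  have hnpos : (0:ℝ) < (n:ℝ) := by linarith
  have hn1 : (0:ℝ) < (n:ℝ) - 1 := by linarith
  set q : ℝ := ((n:ℝ)-1)/(n:ℝ) with hq
  have hqpos : 0 < q := by positivity
  set c₀ : ℝ := (n:ℝ)⁻¹ * (2*C) ^ ((1-(n:ℝ))/(n:ℝ)) with hc₀
  have h2C : (0:ℝ) < 2*C := by linarith
  have hc₀pos : 0 < c₀ := by
    apply mul_pos (by positivity)
    exact Real.rpow_pos_of_pos h2C _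
  -- clamp function
  set clamp : ℝ → ℝ := fun x => min (max x (R/2)) R with hclamp
  have hRhalf : 0 < R/2 := by linarith
  have clamp_mem : ∀ x, clamp x ∈ Set.Icc (R/2) R :=
    fun x => ⟨le_min (le_max_right _ _) (by linarith), min_le_right _ _⟩
  have clamp_mono : Monotone clamp := fun x y hxy => by
    exact min_le_min (max_le_max hxy le_rfl) le_rfl
  have Icc_pos : ∀ x ∈ Set.Icc (R/2) R, (0:ℝ) < x := fun x hx => lt_of_lt_of_le hRhalf hx.1
  have hνc : ∀ x, 0 < ν (clamp x) := fun x => hνpos _ (Icc_pos _ (clamp_mem x))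
  -- extended function
  set h : ℝ → ℝ := fun x => ν (clamp x) ^ ((1:ℝ)/(n:ℝ)) with hh
  have hmonoh : Monotone h := by
    intro x y hxy
    have h1 := clamp_mem x
    have h2 := clamp_mem y
    exact Real.rpow_le_rpow (hνc x).le
      (hmono (Icc_pos _ h1) (Icc_pos _ h2) (clamp_mono hxy)) (by positivity)
  set μ : Measure ℝ := hmonoh.stieltjesFunction.measure with hμ
  -- the working set
  set A' : Set ℝ := A ∩ Set.Ioo (R/2) R with hA'
  have hA'm : MeasurableSet A' := hAm.inter measurableSet_Ioo
  have hA'vol : ENNReal.ofReal (R/4) ≤ volume A' := by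
    refine le_trans ?_ (le_trans hAvol ?_)
    · exact le_rfl
    · have hsub : A ⊆ A' ∪ ({R/2, R} : Set ℝ) := by
        intro x hx
        rcases eq_or_lt_of_le (hA hx).1 with h1 | h1
        · exact Or.inr (Or.inl h1.symm)
        rcases eq_or_lt_of_le (hA hx).2 with h2 | h2
        · exact Or.inr (Or.inr h2)
        · exact Or.inl ⟨hx, h1, h2⟩
      calc volume A ≤ volume (A' ∪ ({R/2, R} : Set ℝ)) := measure_mono hsub
        _ ≤ volume A' + volume ({R/2, R} : Set ℝ) := measure_union_le _ _
        _ = volume A' := by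
            rw [show volume ({R/2, R} : Set ℝ) = 0 from
              (Set.Countable.measure_zero ((Set.toFinite _).countable) _),
              add_zero]
  -- key pointwise bound a.e. on A'
  have hae : ∀ᵐ x ∂(volume.restrict A'),
      ENNReal.ofReal c₀ ≤ Measure.rnDeriv μ volume x := by
    have h1 : ∀ᵐ x ∂(volume.restrict A'), DifferentiableAt ℝ ν x ∧
        ν x / 2 ≤ C * (deriv ν x) ^ ((n:ℝ)/((n:ℝ)-1)) :=
      ae_restrict_of_ae_restrict_of_subset Set.inter_subset_left hineq
    have h2 : ∀ᵐ x ∂(volume.restrict A'),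
        HasDerivAt h (Measure.rnDeriv μ volume x).toReal x :=
      ae_restrict_of_ae (hmonoh.ae_hasDerivAt)
    have h3 : ∀ᵐ x ∂(volume.restrict A'), x ∈ A' := ae_restrict_mem hA'm
    filter_upwards [h1, h2, h3] with x ⟨hdiff, hle⟩ hD hxA'
    have hxI : x ∈ Set.Ioo (R/2) R := hxA'.2
    have hx0 : 0 < x := lt_trans hRhalf hxI.1
    have hνx : 0 < ν x := hνpos x hx0
    -- h equals ν^(1/n) near x
    have heq : h =ᶠ[nhds x] fun y => ν y ^ ((1:ℝ)/(n:ℝ)) := by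
      filter_upwards [Ioo_mem_nhds hxI.1 hxI.2] with y hy
      have : clamp y = y := by
        simp only [hclamp]
        rw [max_eq_left hy.1.le, min_eq_left hy.2.le]
      simp only [hh, this]
    -- hence ν^(1/n) has derivative (rnDeriv).toReal at x
    have hD' : HasDerivAt (fun y => ν y ^ ((1:ℝ)/(n:ℝ)))
        (Measure.rnDeriv μ volume x).toReal x := hD.congr_of_eventuallyEq heq.symm
    -- explicit derivative
    have hD2 : HasDerivAt (fun y => ν y ^ ((1:ℝ)/(n:ℝ)))
        (deriv ν x * ((1:ℝ)/(n:ℝ)) * ν x ^ ((1:ℝ)/(n:ℝ) - 1)) x :=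
      (hdiff.hasDerivAt).rpow_const (Or.inl hνx.ne')
    have huniq : (Measure.rnDeriv μ volume x).toReal
        = deriv ν x * ((1:ℝ)/(n:ℝ)) * ν x ^ ((1:ℝ)/(n:ℝ) - 1) :=
      hD'.unique hD2
    -- deriv ν x ≥ 0
    have hpow : (0:ℝ) < ν x ^ ((1:ℝ)/(n:ℝ) - 1) := Real.rpow_pos_of_pos hνx _
    have hdν : 0 ≤ deriv ν x := by
      by_contra hneg
      push_neg at hneg
      have : (Measure.rnDeriv μ volume x).toReal < 0 := by
        rw [huniq]
        have : deriv ν x * ((1:ℝ)/(n:ℝ)) < 0 := mul_neg_of_neg_of_pos hneg (by positivity)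
        exact mul_neg_of_neg_of_pos this hpow
      exact absurd this (not_lt.mpr ENNReal.toReal_nonneg)
    -- lower bound on deriv ν x
    have hlb : (ν x / (2*C)) ^ q ≤ deriv ν x := by
      have h4 : ν x / (2*C) ≤ (deriv ν x) ^ ((n:ℝ)/((n:ℝ)-1)) := by
        rw [div_le_iff₀ h2C]
        calc ν x = 2 * (ν x / 2) := by ring
          _ ≤ 2 * (C * (deriv ν x) ^ ((n:ℝ)/((n:ℝ)-1))) := by linarith
          _ = (deriv ν x) ^ ((n:ℝ)/((n:ℝ)-1)) * (2*C) := by ring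
      have h5 : ((ν x / (2*C))) ^ q ≤ ((deriv ν x) ^ ((n:ℝ)/((n:ℝ)-1))) ^ q :=
        Real.rpow_le_rpow (by positivity) h4 hqpos.le
      calc (ν x / (2*C)) ^ q ≤ ((deriv ν x) ^ ((n:ℝ)/((n:ℝ)-1))) ^ q := h5
        _ = (deriv ν x) ^ ((n:ℝ)/((n:ℝ)-1) * q) := (Real.rpow_mul hdν _ _).symm
        _ = deriv ν x := by
            have hn0 : (n:ℝ) ≠ 0 := hnpos.ne'
            have hn10 : (n:ℝ) - 1 ≠ 0 := hn1.ne'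
            have hpq : (n:ℝ)/((n:ℝ)-1) * q = 1 := by rw [hq]; field_simp
            rw [hpq, Real.rpow_one]
    -- conclude c₀ ≤ toReal
    have hc : c₀ ≤ (Measure.rnDeriv μ volume x).toReal := by
      rw [huniq]
      have key : (ν x / (2*C)) ^ q * ((1:ℝ)/(n:ℝ)) * ν x ^ ((1:ℝ)/(n:ℝ) - 1)
          ≤ deriv ν x * ((1:ℝ)/(n:ℝ)) * ν x ^ ((1:ℝ)/(n:ℝ) - 1) := by
        exact mul_le_mul_of_nonneg_right
          (mul_le_mul_of_nonneg_right hlb (by positivity : (0:ℝ) ≤ (1:ℝ)/(n:ℝ))) hpow.le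
      refine le_trans (le_of_eq ?_) key
      have hn0 : (n:ℝ) ≠ 0 := hnpos.ne'
      have hn10 : (n:ℝ) - 1 ≠ 0 := hn1.ne'
      have e1 : ν x ^ q * ν x ^ ((1:ℝ)/(n:ℝ) - 1) = 1 := by
        rw [← Real.rpow_add hνx]
        rw [show q + ((1:ℝ)/(n:ℝ) - 1) = 0 by rw [hq]; field_simp; ring]
        exact Real.rpow_zero _
      have e2 : (2*C) ^ ((1-(n:ℝ))/(n:ℝ)) = ((2*C) ^ q)⁻¹ := by
        rw [← Real.rpow_neg h2C.le]
        congr 1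
        rw [hq]; ring
      rw [Real.div_rpow hνx.le h2C.le, hc₀, e2]
      calc (n:ℝ)⁻¹ * ((2*C) ^ q)⁻¹
          = (ν x ^ q * ν x ^ ((1:ℝ)/(n:ℝ) - 1)) * ((n:ℝ)⁻¹ * ((2*C) ^ q)⁻¹) := by
            rw [e1]; ring
        _ = ν x ^ q / (2*C) ^ q * ((1:ℝ)/(n:ℝ)) * ν x ^ ((1:ℝ)/(n:ℝ) - 1) := by ring
    calc ENNReal.ofReal c₀ ≤ ENNReal.ofReal (Measure.rnDeriv μ volume x).toReal :=
          ENNReal.ofReal_le_ofReal hc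
      _ ≤ Measure.rnDeriv μ volume x := ENNReal.ofReal_toReal_le
  -- integrate
  have hint : ENNReal.ofReal c₀ * volume A' ≤ μ A' := by
    calc ENNReal.ofReal c₀ * volume A'
        = ∫⁻ _ in A', ENNReal.ofReal c₀ ∂volume := (setLIntegral_const _ _).symm
      _ ≤ ∫⁻ x in A', Measure.rnDeriv μ volume x ∂volume := lintegral_mono_ae hae
      _ ≤ μ A' := Measure.setLIntegral_rnDeriv_le _
  -- compute μ of the interval
  have hμIoc : μ (Set.Ioc (R/4) R) = ENNReal.ofReal
      (hmonoh.stieltjesFunction R - hmonoh.stieltjesFunction (R/4)) :=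
    StieltjesFunction.measure_Ioc _ _ _
  have hGR : hmonoh.stieltjesFunction R = ν R ^ ((1:ℝ)/(n:ℝ)) := by
    rw [hmonoh.stieltjesFunction_eq]
    apply rightLim_eq_of_tendsto (h := nhdsGT_neBot R)
    have : ∀ᶠ y in nhdsWithin R (Set.Ioi R), ν R ^ ((1:ℝ)/(n:ℝ)) = h y := by
      filter_upwards [self_mem_nhdsWithin] with y (hy : R < y)
      simp only [hh, hclamp]
      rw [max_eq_left (by linarith), min_eq_right hy.le]
    exact Filter.Tendsto.congr' this tendsto_const_nhds
  have hG4 : hmonoh.stieltjesFunction (R/4) = ν (R/2) ^ ((1:ℝ)/(n:ℝ)) := by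
    rw [hmonoh.stieltjesFunction_eq]
    apply rightLim_eq_of_tendsto (h := nhdsGT_neBot (R/4))
    have hmem : Set.Ioo (R/4) (R/2) ∈ nhdsWithin (R/4) (Set.Ioi (R/4)) :=
      Ioo_mem_nhdsGT_of_mem ⟨le_refl _, by linarith⟩
    have : ∀ᶠ y in nhdsWithin (R/4) (Set.Ioi (R/4)), ν (R/2) ^ ((1:ℝ)/(n:ℝ)) = h y := by
      filter_upwards [hmem] with y hy
      simp only [hh, hclamp]
      rw [max_eq_right hy.2.le, min_eq_left (by linarith)]
    exact Filter.Tendsto.congr' this tendsto_const_nhds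
  have hμA' : μ A' ≤ ENNReal.ofReal (ν R ^ ((1:ℝ)/(n:ℝ))) := by
    calc μ A' ≤ μ (Set.Ioc (R/4) R) := by
          apply measure_mono
          intro x hx
          exact ⟨by have := hx.2.1; linarith, hx.2.2.le⟩
      _ = ENNReal.ofReal (ν R ^ ((1:ℝ)/(n:ℝ)) - ν (R/2) ^ ((1:ℝ)/(n:ℝ))) := by
          rw [hμIoc, hGR, hG4]
      _ ≤ ENNReal.ofReal (ν R ^ ((1:ℝ)/(n:ℝ))) := by
          apply ENNReal.ofReal_le_ofReal
          have : 0 ≤ ν (R/2) ^ ((1:ℝ)/(n:ℝ)) := Real.rpow_nonneg (hνpos _ hRhalf).le _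
          linarith
  -- final chain
  have final : ENNReal.ofReal (c₀ * (R/4)) ≤ ENNReal.ofReal (ν R ^ ((1:ℝ)/(n:ℝ))) := by
    rw [ENNReal.ofReal_mul hc₀pos.le]
    calc ENNReal.ofReal c₀ * ENNReal.ofReal (R/4)
        ≤ ENNReal.ofReal c₀ * volume A' := by gcongr
      _ ≤ μ A' := hint
      _ ≤ ENNReal.ofReal (ν R ^ ((1:ℝ)/(n:ℝ))) := hμA'
  have := (ENNReal.ofReal_le_ofReal_iff (Real.rpow_nonneg (hνpos R hR).le _)).mp final
  linarith [this]
end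

section
/- Let E₁, …, E_N ⊆ ℝ^{n+1} be mutually disjoint open sets whose union has full Lebesgue measure in the open ball U_R, and suppose each satisfies the relative isoperimetric inequality min{L^{n+1}(U_R ∩ E), L^{n+1}(U_R \ E)} ≤ C (H^n(U_R ∩ ∂E))^{(n+1)/n}, as well as every finite union Ê of the E_i's (with perimeter of Ê in U_R bounded by H^n(U_R ∩ ∪_i ∂E_i)). If H^n(U_R ∩ ∪_{i=1}^N ∂E_i) ≤ (L^{n+1}(U_R)/(2^{n+2} C))^{n/(n+1)}, then there exists a unique index i₀ such that L^{n+1}(U_R \ E_{i₀}) ≤ C (H^n(U_R ∩ ∪_i ∂E_i))^{(n+1)/n} ≤ 2^{-(n+2)} L^{n+1}(U_R). -/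
open MeasureTheory

/-- If `E₁,…,E_N` are mutually disjoint open sets filling the ball `U_R` up to Lebesgue
measure zero, every finite union of them satisfies the relative isoperimetric inequality
with perimeter controlled by `B := H^n(U_R ∩ ⋃ ∂E_i)`, and `B` is small compared to the
volume of the ball, then `C B^{(n+1)/n} ≤ 2^{-(n+2)} |U_R|` and there is a unique index
`i₀` with `|U_R \ E_{i₀}| ≤ C B^{(n+1)/n}`. -/
theorem stmt_9 {n N : ℕ} (hn : 1 ≤ n) (hN : 0 < N) (R C : ℝ) (hR : 0 < R) (hC : 0 < C)
    (Es : Fin N → Set (EuclideanSpace ℝ (Fin (n+1))))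
    (U : Set (EuclideanSpace ℝ (Fin (n+1))))
    (hU : U = Metric.ball (0 : EuclideanSpace ℝ (Fin (n+1))) R)
    (B : ℝ) (hB : B = (μH[(n:ℝ)] (U ∩ ⋃ i, frontier (Es i))).toReal)
    (hopen : ∀ i, IsOpen (Es i))
    (hdisj : Pairwise (Function.onFun Disjoint Es))
    (hfull : volume (U \ ⋃ i, Es i) = 0)
    (hHfin : μH[(n:ℝ)] (U ∩ ⋃ i, frontier (Es i)) ≠ ⊤)
    (hiso : ∀ s : Finset (Fin N),
      min (volume (U ∩ ⋃ i ∈ s, Es i)).toReal (volume (U \ ⋃ i ∈ s, Es i)).toReal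
        ≤ C * B ^ (((n:ℝ)+1)/(n:ℝ)))
    (hsmall : B ≤ ((volume U).toReal / (2^(n+2) * C)) ^ ((n:ℝ)/((n:ℝ)+1))) :
    C * B ^ (((n:ℝ)+1)/(n:ℝ)) ≤ (2:ℝ) ^ (-((n:ℝ)+2)) * (volume U).toReal
      ∧ ∃! i₀ : Fin N, (volume (U \ Es i₀)).toReal ≤ C * B ^ (((n:ℝ)+1)/(n:ℝ)) := by
  classical
  have hUfin : volume U ≠ ⊤ := by rw [hU]; exact measure_ball_lt_top.ne
  set V : ℝ := (volume U).toReal with hVdef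
  have hVpos : 0 < V := by
    rw [hVdef, hU]
    exact ENNReal.toReal_pos (Metric.measure_ball_pos volume 0 hR).ne' measure_ball_lt_top.ne
  have hB0 : 0 ≤ B := by rw [hB]; exact ENNReal.toReal_nonneg
  set K := C * B ^ (((n:ℝ)+1)/(n:ℝ)) with hKdef
  have hK0 : 0 ≤ K := mul_nonneg hC.le (Real.rpow_nonneg hB0 _)
  have hnR : (0:ℝ) < (n:ℝ) := by exact_mod_cast Nat.lt_of_lt_of_le Nat.zero_lt_one hn
  have h2pos : (0:ℝ) < 2^(n+2) := by positivity
  have hpow : (2:ℝ) ^ (-((n:ℝ)+2)) = ((2:ℝ)^(n+2))⁻¹ := by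
    rw [show (-((n:ℝ)+2)) = -(((n+2 : ℕ)) : ℝ) by push_cast; ring,
      Real.rpow_neg (by norm_num), Real.rpow_natCast]
  -- First part
  have hD : (0:ℝ) ≤ V / (2^(n+2) * C) := by positivity
  have hKle : K ≤ (2:ℝ) ^ (-((n:ℝ)+2)) * V := by
    have h1 : B ^ (((n:ℝ)+1)/(n:ℝ)) ≤ V / (2^(n+2)*C) := by
      calc B ^ (((n:ℝ)+1)/(n:ℝ))
          ≤ ((V/(2^(n+2)*C)) ^ ((n:ℝ)/((n:ℝ)+1))) ^ (((n:ℝ)+1)/(n:ℝ)) :=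
            Real.rpow_le_rpow hB0 hsmall (by positivity)
        _ = (V/(2^(n+2)*C)) ^ (((n:ℝ)/((n:ℝ)+1)) * (((n:ℝ)+1)/(n:ℝ))) :=
            (Real.rpow_mul hD _ _).symm
        _ = V/(2^(n+2)*C) := by
            rw [show ((n:ℝ)/((n:ℝ)+1)) * (((n:ℝ)+1)/(n:ℝ)) = 1 by
              field_simp, Real.rpow_one]
    calc K ≤ C * (V/(2^(n+2)*C)) := mul_le_mul_of_nonneg_left h1 hC.le
      _ = (2:ℝ)^(-((n:ℝ)+2)) * V := by rw [hpow]; field_simp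
  have hK8 : K ≤ V / 8 := by
    have h8 : (8:ℝ) ≤ 2^(n+2) := by
      calc (8:ℝ) = 2^3 := by norm_num
        _ ≤ 2^(n+2) := pow_le_pow_right₀ one_le_two (by omega)
    have hinv : ((2:ℝ)^(n+2))⁻¹ ≤ 8⁻¹ := inv_anti₀ (by norm_num) h8
    rw [hpow] at hKle
    calc K ≤ ((2:ℝ)^(n+2))⁻¹ * V := hKle
      _ ≤ 8⁻¹ * V := mul_le_mul_of_nonneg_right hinv hVpos.le
      _ = V / 8 := by ring
  refine ⟨hKle, ?_⟩
  -- measurability and splitting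
  have hmeasEs : ∀ i, MeasurableSet (Es i) := fun i => (hopen i).measurableSet
  have hfinsub : ∀ A : Set (EuclideanSpace ℝ (Fin (n+1))), A ⊆ U → volume A ≠ ⊤ :=
    fun A hA => ((measure_mono hA).trans_lt hUfin.lt_top).ne
  have hsplit : ∀ A : Set (EuclideanSpace ℝ (Fin (n+1))), MeasurableSet A →
      (volume (U ∩ A)).toReal + (volume (U \ A)).toReal = V := by
    intro A hA
    rw [hVdef, ← measure_inter_add_diff U hA,
      ENNReal.toReal_add (hfinsub _ Set.inter_subset_left) (hfinsub _ Set.diff_subset)]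
  have hmeasU : ∀ s : Finset (Fin N), MeasurableSet (⋃ i ∈ s, Es i) :=
    fun s => MeasurableSet.biUnion s.countable_toSet (fun i _ => hmeasEs i)
  -- dichotomy from the isoperimetric inequality
  have hdich : ∀ s : Finset (Fin N),
      (volume (U ∩ ⋃ i ∈ s, Es i)).toReal ≤ K ∨
      V - K ≤ (volume (U ∩ ⋃ i ∈ s, Es i)).toReal := by
    intro s
    have h := hiso s
    have hsp := hsplit _ (hmeasU s)
    rcases min_le_iff.mp h with h' | h'
    · exact Or.inl h'
    · exact Or.inr (by linarith)
  -- the increasing family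
  set f : ℕ → ℝ := fun k =>
    (volume (U ∩ ⋃ i ∈ Finset.univ.filter (fun i : Fin N => (i:ℕ) < k), Es i)).toReal with hf
  have hf0 : f 0 = 0 := by simp [hf]
  have hfN : f N = V := by
    have huniv : (Finset.univ.filter (fun i : Fin N => (i:ℕ) < N)) = Finset.univ := by
      ext i; simp [i.isLt]
    have hEq : (⋃ i ∈ Finset.univ.filter (fun i : Fin N => (i:ℕ) < N), Es i) = ⋃ i, Es i := by
      rw [huniv]; simp
    have hsp := hsplit _ (hmeasU (Finset.univ.filter (fun i : Fin N => (i:ℕ) < N)))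
    rw [hEq] at hsp
    have h0 : (volume (U \ ⋃ i, Es i)).toReal = 0 := by rw [hfull]; simp
    show (volume (U ∩ ⋃ i ∈ Finset.univ.filter (fun i : Fin N => (i:ℕ) < N), Es i)).toReal = V
    rw [hEq]
    linarith [hsp, h0]
  have hPN : K < f N := by rw [hfN]; linarith
  have hex : ∃ k, K < f k := ⟨N, hPN⟩
  set k := Nat.find hex with hk
  have hfk : K < f k := Nat.find_spec hex
  have hkN : k ≤ N := Nat.find_le hPN
  have hk1 : 1 ≤ k := by
    by_contra h
    have : k = 0 := by omega
    rw [this, hf0] at hfk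
    linarith
  have hfk1 : f (k-1) ≤ K := by
    have := Nat.find_min hex (m := k - 1) (by omega)
    linarith [not_lt.mp this]
  have hfkV : V - K ≤ f k := by
    rcases hdich (Finset.univ.filter (fun i : Fin N => (i:ℕ) < k)) with h | h
    · exact absurd h (not_le.mpr hfk)
    · exact h
  -- the distinguished index
  set i₀ : Fin N := ⟨k - 1, by omega⟩ with hi₀
  -- the k-union is contained in the (k-1)-union together with Es i₀
  have hsub : (U ∩ ⋃ i ∈ Finset.univ.filter (fun i : Fin N => (i:ℕ) < k), Es i) ⊆
      (U ∩ ⋃ i ∈ Finset.univ.filter (fun i : Fin N => (i:ℕ) < k-1), Es i) ∪ (U ∩ Es i₀) := by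
    rintro x ⟨hxU, hx⟩
    simp only [Set.mem_iUnion, Finset.mem_filter, Finset.mem_univ, true_and,
      exists_prop] at hx
    obtain ⟨i, hik, hxi⟩ := hx
    rcases Nat.lt_or_ge (i : ℕ) (k-1) with h | h
    · left
      exact ⟨hxU, by
        simp only [Set.mem_iUnion, Finset.mem_filter, Finset.mem_univ, true_and, exists_prop]
        exact ⟨i, h, hxi⟩⟩
    · right
      have : i = i₀ := by
        apply Fin.ext
        simp only [hi₀]
        omega
      exact ⟨hxU, this ▸ hxi⟩
  have hjump : f k ≤ f (k-1) + (volume (U ∩ Es i₀)).toReal := by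
    have h1 : volume (U ∩ ⋃ i ∈ Finset.univ.filter (fun i : Fin N => (i:ℕ) < k), Es i) ≤
        volume (U ∩ ⋃ i ∈ Finset.univ.filter (fun i : Fin N => (i:ℕ) < k-1), Es i) +
        volume (U ∩ Es i₀) := (measure_mono hsub).trans (measure_union_le _ _)
    have hfinA := hfinsub _ (Set.inter_subset_left (s := U)
      (t := ⋃ i ∈ Finset.univ.filter (fun i : Fin N => (i:ℕ) < k-1), Es i))
    have hfinB := hfinsub _ (Set.inter_subset_left (s := U) (t := Es i₀))
    have := ENNReal.toReal_mono (by
      exact ENNReal.add_ne_top.mpr ⟨hfinA, hfinB⟩) h1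
    rwa [ENNReal.toReal_add hfinA hfinB] at this
  have hbig : K < (volume (U ∩ Es i₀)).toReal := by
    have : V - 2*K ≤ (volume (U ∩ Es i₀)).toReal := by linarith
    linarith
  -- existence
  have hone : (⋃ i ∈ ({i₀} : Finset (Fin N)), Es i) = Es i₀ := by simp
  have hEx : (volume (U \ Es i₀)).toReal ≤ K := by
    have h := hiso {i₀}
    rw [hone] at h
    rcases min_le_iff.mp h with h' | h'
    · exact absurd h' (not_le.mpr hbig)
    · exact h'
  refine ⟨i₀, hEx, ?_⟩
  intro j hj
  by_contra hne
  have hdis : Disjoint (Es i₀) (Es j) := hdisj (Ne.symm hne)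
  have hsub2 : U ∩ Es i₀ ⊆ U \ Es j := by
    rintro x ⟨hxU, hxi⟩
    exact ⟨hxU, fun hxj => Set.disjoint_left.mp hdis hxi hxj⟩
  have : (volume (U ∩ Es i₀)).toReal ≤ (volume (U \ Es j)).toReal :=
    ENNReal.toReal_mono (hfinsub _ Set.diff_subset) (measure_mono hsub2)
  linarith
end

section
/- Let V be an n-varifold on ℝ^{n+1} with first variation δV, let T ∈ G(n+1,n), and let f : ℝ^{n+1} → ℝ^{n+1} be Lipschitz. Suppose V is supported (in its Grassmannian component) so that at V-a.e. (x,S) the differential ∇f(x) annihilates a unit direction v₁ ∈ T: ∇_{v₁} f(x) = 0. Then for V-a.e. (x,S), the Jacobian satisfies |Λ_n ∇f(x) ∘ S|² = (u_{1,n+1})² · det[((∇f)ᵀ ∘ ∇f)_{2≤i,j≤n+1}], where u_{n+1} is a unit normal to S and u_{1,n+1} is its component in the v₁ direction; in particular |Λ_n ∇f(x)∘S| ≤ ‖S − T‖ · ∏_{j=2}^{n+1} |∇_{v_j} f(x)|, where v₂,…,v_{n+1} complete v₁ to an orthonormal basis. -/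
open MeasureTheory

/-- Orthogonal projection of `ℝ^{n+1}` onto the hyperplane orthogonal to `w`. -/
noncomputable def projPerp {n : ℕ} (w : EuclideanSpace ℝ (Fin (n+1))) :
    EuclideanSpace ℝ (Fin (n+1)) →L[ℝ] EuclideanSpace ℝ (Fin (n+1)) :=
  ((ℝ ∙ w)ᗮ).subtypeL ∘L Submodule.orthogonalProjectionOnto (ℝ ∙ w)ᗮ


open Matrix

lemma trace_eq_sum_eig {m : ℕ} {A : Matrix (Fin m) (Fin m) ℝ} (hA : A.IsHermitian) :
    A.trace = ∑ i, hA.eigenvalues i := by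
  simpa using hA.trace_eq_sum_eigenvalues

lemma gram_posSemidef {m : ℕ} {E : Type*} [NormedAddCommGroup E] [InnerProductSpace ℝ E]
    (v : Fin m → E) :
    (Matrix.of fun i j => (inner ℝ (v i) (v j) : ℝ)).PosSemidef := by
  rw [Matrix.posSemidef_iff_dotProduct_mulVec]
  constructor
  · ext i j
    simp [Matrix.conjTranspose_apply, real_inner_comm]
  · intro x
    have h : (Matrix.of fun i j => (inner ℝ (v i) (v j) : ℝ)) *ᵥ x
        = fun i => (inner ℝ (v i) (∑ j, x j • v j) : ℝ) := by
      funext i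
      simp [Matrix.mulVec, dotProduct, inner_sum, real_inner_smul_right, mul_comm]
    rw [h]
    have : dotProduct (star x) (fun i => (inner ℝ (v i) (∑ j, x j • v j) : ℝ))
        = (inner ℝ (∑ i, x i • v i) (∑ j, x j • v j) : ℝ) := by
      rw [sum_inner]
      simp [dotProduct, real_inner_smul_left]
    rw [this]
    exact real_inner_self_nonneg


lemma psd_det_nonneg {m : ℕ} {A : Matrix (Fin m) (Fin m) ℝ} (hA : A.PosSemidef) : 0 ≤ A.det := by
  have h := hA.1.det_eq_prod_eigenvalues
  have : A.det = ∏ i, hA.1.eigenvalues i := by simpa using h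
  rw [this]
  exact Finset.prod_nonneg fun i _ => hA.eigenvalues_nonneg i

lemma gram_det_le_one {m : ℕ} {E : Type*} [NormedAddCommGroup E] [InnerProductSpace ℝ E]
    (u : Fin m → E) (hu : ∀ i, ‖u i‖ = 1) :
    (Matrix.of fun i j => (inner ℝ (u i) (u j) : ℝ)).det ≤ 1 := by
  rcases Nat.eq_zero_or_pos m with hm | hm
  · subst hm
    simp [Matrix.det_fin_zero]
  · set G : Matrix (Fin m) (Fin m) ℝ := Matrix.of fun i j => (inner ℝ (u i) (u j) : ℝ) with hGdef
    have hpsd := gram_posSemidef u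
    have hherm : G.IsHermitian := hpsd.1
    have heig : ∀ i, 0 ≤ hherm.eigenvalues i := hpsd.eigenvalues_nonneg
    have hdiag : ∀ i, G i i = 1 := by
      intro i
      show (inner ℝ (u i) (u i) : ℝ) = 1
      rw [real_inner_self_eq_norm_sq, hu i]; norm_num
    have htrace : G.trace = m := by
      have ht : G.trace = ∑ i, G i i := rfl
      rw [ht, Finset.sum_congr rfl fun i _ => hdiag i]
      simp
    have hsum : ∑ i, hherm.eigenvalues i = m := by
      rw [← trace_eq_sum_eig hherm, htrace]
    have hdet : G.det = ∏ i, hherm.eigenvalues i := by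
      have := hherm.det_eq_prod_eigenvalues
      simpa using this
    rw [hdet]
    have hgm := Real.geom_mean_le_arith_mean (Finset.univ : Finset (Fin m))
      (fun _ => (1:ℝ)) (fun i => hherm.eigenvalues i)
      (fun i _ => zero_le_one)
      (by simpa using hm)
      (fun i _ => heig i)
    simp only [Real.rpow_one, Finset.sum_const, Finset.card_univ, Fintype.card_fin,
      nsmul_eq_mul, mul_one, one_mul] at hgm
    rw [hsum] at hgm
    have hm' : (m:ℝ) ≠ 0 := Nat.cast_ne_zero.mpr hm.ne'
    rw [div_self hm'] at hgm
    have hp : (0:ℝ) ≤ ∏ i, hherm.eigenvalues i := Finset.prod_nonneg fun i _ => heig i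
    calc (∏ i, hherm.eigenvalues i)
        = ((∏ i, hherm.eigenvalues i) ^ ((m:ℝ))⁻¹) ^ m := by
          rw [← Real.rpow_natCast (_ ^ ((m:ℝ))⁻¹) m, ← Real.rpow_mul hp,
            inv_mul_cancel₀ hm', Real.rpow_one]
      _ ≤ 1 ^ m := pow_le_pow_left₀ (Real.rpow_nonneg hp _) hgm m
      _ = 1 := one_pow m

lemma gram_det_le {m : ℕ} {E : Type*} [NormedAddCommGroup E] [InnerProductSpace ℝ E]
    (v : Fin m → E) :
    (Matrix.of fun i j => (inner ℝ (v i) (v j) : ℝ)).det ≤ ∏ i, ‖v i‖ ^ 2 := by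
  by_cases hz : ∃ i, v i = 0
  · obtain ⟨i, hi⟩ := hz
    have h1 : (Matrix.of fun i j => (inner ℝ (v i) (v j) : ℝ)).det = 0 := by
      apply Matrix.det_eq_zero_of_row_eq_zero i
      intro j
      simp [hi]
    have h2 : ∏ i, ‖v i‖ ^ 2 = 0 :=
      Finset.prod_eq_zero (Finset.mem_univ i) (by simp [hi])
    rw [h1, h2]
  · push_neg at hz
    set c : Fin m → ℝ := fun i => ‖v i‖ with hc
    have hc0 : ∀ i, c i ≠ 0 := fun i => norm_ne_zero_iff.mpr (hz i)
    set u : Fin m → E := fun i => (c i)⁻¹ • v i with hudef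
    have hu : ∀ i, ‖u i‖ = 1 := by
      intro i
      rw [hudef]
      simp only [norm_smul, norm_inv, Real.norm_eq_abs, hc, abs_norm]
      exact inv_mul_cancel₀ (hc0 i)
    have key : (Matrix.of fun i j => (inner ℝ (v i) (v j) : ℝ))
        = Matrix.diagonal c * (Matrix.of fun i j => (inner ℝ (u i) (u j) : ℝ))
          * Matrix.diagonal c := by
      ext i j
      simp only [Matrix.mul_diagonal, Matrix.diagonal_mul, Matrix.of_apply, hudef,
        real_inner_smul_left, real_inner_smul_right]
      have h1 := hc0 i
      have h2 := hc0 j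
      field_simp
    rw [key, Matrix.det_mul, Matrix.det_mul, Matrix.det_diagonal]
    have hle := gram_det_le_one u hu
    have hdn := psd_det_nonneg (gram_posSemidef u)
    have hcp : (0:ℝ) ≤ ∏ i, c i := Finset.prod_nonneg fun i _ => norm_nonneg _
    calc (∏ i, c i) * (Matrix.of fun i j => (inner ℝ (u i) (u j) : ℝ)).det * ∏ i, c i
        ≤ (∏ i, c i) * 1 * ∏ i, c i := by
          nlinarith [mul_le_mul_of_nonneg_left hle (mul_nonneg hcp hcp)]
      _ = ∏ i, c i ^ 2 := by rw [mul_one, ← Finset.prod_mul_distrib]; simp [sq]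
      _ = ∏ i, ‖v i‖ ^ 2 := rfl

lemma projPerp_apply {n : ℕ} (w : EuclideanSpace ℝ (Fin (n+1))) (hw : ‖w‖ = 1)
    (x : EuclideanSpace ℝ (Fin (n+1))) :
    projPerp w x = x - (inner ℝ w x : ℝ) • w := by
  have h1 : projPerp w x = (Submodule.orthogonalProjectionOnto (ℝ ∙ w)ᗮ x : EuclideanSpace ℝ (Fin (n+1))) := rfl
  rw [h1, Submodule.orthogonalProjectionOnto_orthogonal]
  rw [← Submodule.starProjection_unit_singleton ℝ hw x]

lemma euclid_decomp {n : ℕ} (x : EuclideanSpace ℝ (Fin (n+1))) :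
    x = ∑ k, x k • EuclideanSpace.single k (1:ℝ) := by
  have h := (EuclideanSpace.basisFun (Fin (n+1)) ℝ).sum_repr x
  have h2 : ∀ k : Fin (n+1), ((EuclideanSpace.basisFun (Fin (n+1)) ℝ).repr x k)
      • (EuclideanSpace.basisFun (Fin (n+1)) ℝ) k = x k • EuclideanSpace.single k (1:ℝ) := by
    intro k
    rw [EuclideanSpace.basisFun_repr, EuclideanSpace.basisFun_apply]
  rw [Finset.sum_congr rfl fun k _ => h2 k] at h
  exact h.symm

lemma core {n : ℕ} (hn : 1 ≤ n)
    (b : OrthonormalBasis (Fin (n+1)) ℝ (EuclideanSpace ℝ (Fin (n+1))))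
    (D : EuclideanSpace ℝ (Fin (n+1)) →L[ℝ] EuclideanSpace ℝ (Fin (n+1)))
    (h0 : D (EuclideanSpace.single 0 1) = 0) :
      (Matrix.det (Matrix.of fun i j : Fin n =>
          (inner ℝ (D (b i.castSucc)) (D (b j.castSucc)) : ℝ))
        = (inner ℝ (b (Fin.last n)) (EuclideanSpace.single (0 : Fin (n+1)) (1:ℝ)) : ℝ)^2 *
          Matrix.det (Matrix.of fun i j : Fin n =>
            (inner ℝ (D (EuclideanSpace.single i.succ 1))
              (D (EuclideanSpace.single j.succ 1)) : ℝ)))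
      ∧ Real.sqrt (Matrix.det (Matrix.of fun i j : Fin n =>
            (inner ℝ (D (b i.castSucc)) (D (b j.castSucc)) : ℝ)))
          ≤ ‖projPerp (b (Fin.last n)) - projPerp (EuclideanSpace.single (Fin.last n) (1:ℝ))‖
            * ∏ j : Fin n, ‖D (EuclideanSpace.single j.succ (1:ℝ))‖ := by
  set E := EuclideanSpace ℝ (Fin (n+1))
  set w : Fin n → E := fun j => D (EuclideanSpace.single j.succ 1) with hw
  set A : Matrix (Fin n) (Fin n) ℝ := Matrix.of fun i j => (inner ℝ (w i) (w j) : ℝ) with hA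
  set M : Matrix (Fin n) (Fin n) ℝ := Matrix.of fun i k => (b i.castSucc) k.succ with hM
  -- D (b i.castSucc) = ∑ k, M i k • w k
  have hDb : ∀ i : Fin n, D (b i.castSucc) = ∑ k : Fin n, M i k • w k := by
    intro i
    conv_lhs => rw [euclid_decomp (b i.castSucc)]
    rw [map_sum, Fin.sum_univ_succ]
    simp only [ContinuousLinearMap.map_smul, h0, smul_zero, zero_add]
    rfl
  -- Gram matrix factorization
  have hG : (Matrix.of fun i j : Fin n => (inner ℝ (D (b i.castSucc)) (D (b j.castSucc)) : ℝ))
      = M * A * Mᵀ := by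
    ext i j
    simp only [Matrix.of_apply, hDb, Matrix.mul_apply, Matrix.transpose_apply, hA,
      sum_inner, inner_sum, real_inner_smul_left, real_inner_smul_right,
      Finset.sum_mul, Finset.mul_sum]
    refine Finset.sum_congr rfl fun k _ => ?_
    refine Finset.sum_congr rfl fun l _ => ?_
    rw [real_inner_comm]
    ring
  have horth : ∀ x y : Fin (n+1), ∑ k, (b x) k * (b y) k = if x = y then 1 else 0 := by
    intro x y
    have h := orthonormal_iff_ite.mp b.orthonormal x y
    rw [PiLp.inner_apply] at h
    simpa [RCLike.inner_apply, conj_trivial, mul_comm] using h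
  have hMMt : M * Mᵀ = 1 + Matrix.replicateCol Unit (fun i : Fin n => -(b i.castSucc 0))
      * Matrix.replicateRow Unit (fun i : Fin n => b i.castSucc 0) := by
    ext i j
    have hsum := horth i.castSucc j.castSucc
    rw [Fin.sum_univ_succ] at hsum
    simp only [Matrix.mul_apply, Matrix.transpose_apply, Matrix.add_apply, Matrix.one_apply,
      Matrix.replicateCol_apply, Matrix.replicateRow_apply, hM, Matrix.of_apply, Finset.univ_unique,
      Finset.sum_singleton]
    simp only [Fin.castSucc_inj] at hsum
    by_cases hij : i = j
    · simp only [hij, if_pos rfl] at hsum ⊢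
      linarith
    · simp only [hij, if_neg hij] at hsum ⊢
      linarith
  have hdetMMt : (M * Mᵀ).det = 1 - ∑ i : Fin n, (b i.castSucc 0)^2 := by
    rw [hMMt, Matrix.det_one_add_replicateCol_mul_replicateRow]
    simp only [dotProduct]
    have hterm : ∑ x : Fin n, b x.castSucc 0 * -b x.castSucc 0
        = -∑ x : Fin n, (b x.castSucc 0)^2 := by
      rw [← Finset.sum_neg_distrib]
      exact Finset.sum_congr rfl fun x _ => by ring
    rw [hterm]
    ring
  have hcol : ∑ i : Fin (n+1), ((b i) 0)^2 = 1 := by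
    have hU : (Matrix.of fun i k : Fin (n+1) => (b i) k)
        * (Matrix.of fun i k : Fin (n+1) => (b i) k)ᵀ = 1 := by
      ext x y
      simp only [Matrix.mul_apply, Matrix.transpose_apply, Matrix.of_apply, Matrix.one_apply]
      exact horth x y
    have hU' := mul_eq_one_comm.mp hU
    have h00 : ((Matrix.of fun i k : Fin (n+1) => (b i) k)ᵀ
        * (Matrix.of fun i k : Fin (n+1) => (b i) k)) 0 0 = (1 : Matrix (Fin (n+1)) (Fin (n+1)) ℝ) 0 0 := by
      rw [hU']
    simp only [Matrix.mul_apply, Matrix.transpose_apply, Matrix.of_apply, Matrix.one_apply_eq] at h00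
    rw [← h00]
    exact Finset.sum_congr rfl fun i _ => (sq ((b i) 0)).symm ▸ rfl
  have hdetM2 : M.det^2 = ((b (Fin.last n)) 0)^2 := by
    have h1 : M.det^2 = (M*Mᵀ).det := by rw [Matrix.det_mul, Matrix.det_transpose, sq]
    rw [h1, hdetMMt]
    rw [Fin.sum_univ_castSucc] at hcol
    linarith
  have hinner0 : (inner ℝ (b (Fin.last n)) (EuclideanSpace.single (0:Fin (n+1)) (1:ℝ)) : ℝ)
      = (b (Fin.last n)) 0 := by
    rw [EuclideanSpace.inner_single_right]
    simp
  have hdetG : (Matrix.of fun i j : Fin n =>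
      (inner ℝ (D (b i.castSucc)) (D (b j.castSucc)) : ℝ)).det
      = ((b (Fin.last n)) 0)^2 * A.det := by
    rw [hG, Matrix.det_mul, Matrix.det_mul, Matrix.det_transpose]
    have h2 : M.det * A.det * M.det = M.det^2 * A.det := by ring
    rw [h2, hdetM2]
  constructor
  · rw [hdetG, hinner0]
  · have hAnn : (0:ℝ) ≤ A.det := psd_det_nonneg (gram_posSemidef w)
    have hsqrt : Real.sqrt ((Matrix.of fun i j : Fin n =>
        (inner ℝ (D (b i.castSucc)) (D (b j.castSucc)) : ℝ)).det)
        = |(b (Fin.last n)) 0| * Real.sqrt A.det := by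
      rw [hdetG, Real.sqrt_mul (sq_nonneg _), Real.sqrt_sq_eq_abs]
    rw [hsqrt]
    have hHad : Real.sqrt A.det ≤ ∏ j : Fin n, ‖w j‖ := by
      have h1 := gram_det_le w
      have h2 : ∏ i : Fin n, ‖w i‖^2 = (∏ i : Fin n, ‖w i‖)^2 := by
        rw [← Finset.prod_pow]
      calc Real.sqrt A.det ≤ Real.sqrt ((∏ i : Fin n, ‖w i‖)^2) :=
            Real.sqrt_le_sqrt (by rw [← h2]; exact h1)
        _ = ∏ i : Fin n, ‖w i‖ := Real.sqrt_sq (Finset.prod_nonneg fun i _ => norm_nonneg _)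
    have hnorm : |(b (Fin.last n)) 0|
        ≤ ‖projPerp (b (Fin.last n)) - projPerp (EuclideanSpace.single (Fin.last n) (1:ℝ))‖ := by
      set P := projPerp (b (Fin.last n)) - projPerp (EuclideanSpace.single (Fin.last n) (1:ℝ))
        with hPdef
      have hb1 : ‖b (Fin.last n)‖ = 1 := b.orthonormal.1 (Fin.last n)
      have hs1 : ‖(EuclideanSpace.single (Fin.last n) (1:ℝ) : E)‖ = 1 := by
        rw [EuclideanSpace.norm_single]; norm_num
      have hlast0 : (Fin.last n) ≠ (0 : Fin (n+1)) := by
        rw [Ne, Fin.ext_iff]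
        simp only [Fin.val_last, Fin.val_zero]
        omega
      have hPe : P (EuclideanSpace.single (0:Fin (n+1)) (1:ℝ))
          = -(((b (Fin.last n)) 0) • b (Fin.last n)) := by
        rw [hPdef, ContinuousLinearMap.sub_apply, projPerp_apply _ hb1, projPerp_apply _ hs1]
        have hz : (inner ℝ (EuclideanSpace.single (Fin.last n) (1:ℝ))
            (EuclideanSpace.single (0:Fin (n+1)) (1:ℝ)) : ℝ) = 0 := by
          rw [EuclideanSpace.inner_single_right]
          simp [EuclideanSpace.single_apply, hlast0]
        rw [hz, hinner0]
        simp
      have hPen : ‖P (EuclideanSpace.single (0:Fin (n+1)) (1:ℝ))‖ = |(b (Fin.last n)) 0| := by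
        rw [hPe, norm_neg, norm_smul, hb1, Real.norm_eq_abs, mul_one]
      rw [← hPen]
      calc ‖P (EuclideanSpace.single (0:Fin (n+1)) (1:ℝ))‖
          ≤ ‖P‖ * ‖(EuclideanSpace.single (0:Fin (n+1)) (1:ℝ) : E)‖ := P.le_opNorm _
        _ = ‖P‖ := by rw [EuclideanSpace.norm_single]; norm_num
    exact mul_le_mul hnorm hHad (Real.sqrt_nonneg _) (norm_nonneg _)


/-- Binet–Cauchy factorization of the `n`-Jacobian: if `V` is an `n`-varifold and `f` is
Lipschitz with `∇f(x) v₁ = 0` (`v₁` the first coordinate direction, lying in the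
reference plane `T = {x_{n+1} = 0}`), then `V`-a.e., for any orthonormal basis `b` with
`S` the span of `b₁,…,b_n` and `b_{n+1}` the unit normal,
`|Λ_n ∇f(x)∘S|² = (u_{1,n+1})² det[((∇f)ᵀ∇f)_{2≤i,j≤n+1}]` and consequently
`|Λ_n ∇f(x)∘S| ≤ ‖S − T‖ ∏_{j=2}^{n+1} |∇_{v_j} f(x)|`. -/
theorem stmt_15 {n : ℕ} (hn : 1 ≤ n)
    [MeasurableSpace (EuclideanSpace ℝ (Fin (n+1)) →L[ℝ] EuclideanSpace ℝ (Fin (n+1)))]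
    (V : Measure (EuclideanSpace ℝ (Fin (n+1)) ×
      (EuclideanSpace ℝ (Fin (n+1)) →L[ℝ] EuclideanSpace ℝ (Fin (n+1)))))
    (f : EuclideanSpace ℝ (Fin (n+1)) → EuclideanSpace ℝ (Fin (n+1)))
    (K : NNReal) (hf : LipschitzWith K f)
    (hae : ∀ᵐ p ∂V, fderiv ℝ f p.1 (EuclideanSpace.single 0 1) = 0 ∧
      ∃ b : OrthonormalBasis (Fin (n+1)) ℝ (EuclideanSpace ℝ (Fin (n+1))),
        p.2 = projPerp (b (Fin.last n))) :
    ∀ᵐ p ∂V, ∀ b : OrthonormalBasis (Fin (n+1)) ℝ (EuclideanSpace ℝ (Fin (n+1))),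
      p.2 = projPerp (b (Fin.last n)) →
      fderiv ℝ f p.1 (EuclideanSpace.single 0 1) = 0 →
      (Matrix.det (Matrix.of fun i j : Fin n =>
          (inner ℝ (fderiv ℝ f p.1 (b i.castSucc)) (fderiv ℝ f p.1 (b j.castSucc)) : ℝ))
        = (inner ℝ (b (Fin.last n)) (EuclideanSpace.single (0 : Fin (n+1)) (1:ℝ)) : ℝ)^2 *
          Matrix.det (Matrix.of fun i j : Fin n =>
            (inner ℝ (fderiv ℝ f p.1 (EuclideanSpace.single i.succ 1))
              (fderiv ℝ f p.1 (EuclideanSpace.single j.succ 1)) : ℝ)))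
      ∧ Real.sqrt (Matrix.det (Matrix.of fun i j : Fin n =>
            (inner ℝ (fderiv ℝ f p.1 (b i.castSucc)) (fderiv ℝ f p.1 (b j.castSucc)) : ℝ)))
          ≤ ‖p.2 - projPerp (EuclideanSpace.single (Fin.last n) (1:ℝ))‖
            * ∏ j : Fin n, ‖fderiv ℝ f p.1 (EuclideanSpace.single j.succ (1:ℝ))‖ := by
  refine Filter.Eventually.of_forall fun p => ?_
  intro b hb h0
  rw [hb]
  exact core hn b (fderiv ℝ f p.1) h0
end
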